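/- A vector Ψ : (ZMod d)⁴ → ℂ satisfies (U_{p,q} ⊗ U_{p,q} ⊗ conj(U_{p,q}) ⊗ conj(U_{p,q})) Ψ = Ψ for all p, q ∈ ZMod d if and only if Ψ lies in the linear span of the d² double-Bell vectors Φ_{r,s}, (r,s) ∈ ZMod d × ZMod d, defined by Φ_{r,s}(i,j,k,l) = (U_{r,s}ᴴ)_{i,l} · (U_{r,s})_{j,k}. In particular, the subspace of such invariant vectors has dimension d². -/

import Mathlib

open Matrix Kronecker BigOperators

set_option linter.unusedSectionVars false

/-- ω = exp(2πi/d). -/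
noncomputable def omega (d : ℕ) : ℂ := Complex.exp (2 * Real.pi * Complex.I / d)

/-- The Weyl–Heisenberg matrix `U_{p,q}`. -/
noncomputable def WH (d : ℕ) [NeZero d] (p q : ZMod d) : Matrix (ZMod d) (ZMod d) ℂ :=
  fun j k => if j = k + p then omega d ^ (q.val * k.val) else 0

/-- The double-Bell vector `Φ_{r,s}(i,j,k,l) = (U_{r,s}ᴴ)_{i,l}·(U_{r,s})_{j,k}`. -/
noncomputable def doubleBell (d : ℕ) [NeZero d] (rs : ZMod d × ZMod d) :
    ZMod d × ZMod d × ZMod d × ZMod d → ℂ :=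
  fun x => (WH d rs.1 rs.2)ᴴ x.1 x.2.2.2 * WH d rs.1 rs.2 x.2.1 x.2.2.1

section helpers
variable (d : ℕ) [NeZero d]

lemma omega_prim : IsPrimitiveRoot (omega d) d :=
  Complex.isPrimitiveRoot_exp d (NeZero.ne d)

noncomputable def ph (a : ZMod d) : ℂ := omega d ^ a.val

lemma omega_pow_d : omega d ^ d = 1 := (omega_prim d).pow_eq_one

lemma omega_pow_mod (n : ℕ) : omega d ^ (n % d) = omega d ^ n := by
  conv_rhs => rw [← Nat.mod_add_div n d, pow_add, pow_mul, omega_pow_d, one_pow, mul_one]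

lemma ph_zero : ph d 0 = 1 := by simp [ph, ZMod.val_zero]

lemma ph_add (a b : ZMod d) : ph d (a + b) = ph d a * ph d b := by
  rw [ph, ph, ph, ZMod.val_add, omega_pow_mod, pow_add]

lemma pow_val_mul (q a : ZMod d) : omega d ^ (q.val * a.val) = ph d (q * a) := by
  rw [ph, ZMod.val_mul, omega_pow_mod]

lemma ph_mul_neg (a : ZMod d) : ph d a * ph d (-a) = 1 := by
  rw [← ph_add, add_neg_cancel, ph_zero]

lemma star_ph (a : ZMod d) : (starRingEnd ℂ) (ph d a) = ph d (-a) := by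
  have h1 : ‖omega d‖ = 1 := by
    have : 2 * Real.pi * Complex.I / d = ((2 * Real.pi / d : ℝ) : ℂ) * Complex.I := by
      push_cast; ring
    rw [omega, this, Complex.norm_exp_ofReal_mul_I]
  have habs : ‖ph d a‖ = 1 := by rw [ph, norm_pow, h1, one_pow]
  have h2 : (starRingEnd ℂ) (ph d a) * ph d a = 1 := by
    rw [mul_comm, Complex.mul_conj', habs]; norm_num
  calc (starRingEnd ℂ) (ph d a)
      = (starRingEnd ℂ) (ph d a) * (ph d a * ph d (-a)) := by rw [ph_mul_neg, mul_one]
    _ = ph d (-a) := by rw [← mul_assoc, h2, one_mul]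

lemma ph_eq_one_iff (a : ZMod d) : ph d a = 1 ↔ a = 0 := by
  rw [ph, (omega_prim d).pow_eq_one_iff_dvd]
  constructor
  · intro h
    exact (ZMod.val_eq_zero a).mp (Nat.eq_zero_of_dvd_of_lt h a.val_lt)
  · intro h; simp [h, ZMod.val_zero]

lemma smul_eq_t (n : ℕ) (t : ZMod d) : ph d ((n : ZMod d) * t) = ph d t ^ n := by
  induction n with
  | zero => simp [ph_zero]
  | succ n ih => push_cast; rw [add_mul, one_mul, ph_add, ih, pow_succ]

lemma sum_ph (t : ZMod d) : ∑ s : ZMod d, ph d (s * t) = if t = 0 then (d : ℂ) else 0 := by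
  have key : ∀ s : ZMod d, ph d (s * t) = ph d t ^ s.val := by
    intro s
    rw [← smul_eq_t d s.val t, ZMod.natCast_val, ZMod.cast_id]
  simp_rw [key]
  rw [Finset.sum_nbij' (t := Finset.range d) (fun (s : ZMod d) => s.val)
    (fun (n : ℕ) => (n : ZMod d))
    (fun s _ => Finset.mem_range.mpr s.val_lt)
    (fun n _ => Finset.mem_univ _)
    (fun s _ => by simp [ZMod.natCast_val, ZMod.cast_id])
    (fun n hn => ZMod.val_natCast_of_lt (Finset.mem_range.mp hn))
    (fun s _ => rfl)]
  by_cases ht : t = 0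
  · simp [ht, ph_zero, Finset.sum_const]
  · have hph : ph d t ≠ 1 := fun h => ht ((ph_eq_one_iff d t).mp h)
    rw [if_neg ht, geom_sum_eq hph]
    have : ph d t ^ d = 1 := by
      rw [ph, ← pow_mul, mul_comm, pow_mul, omega_pow_d, one_pow]
    rw [this, sub_self, zero_div]

end helpers

section main
variable (d : ℕ) [NeZero d]

lemma WH_apply (p q j k : ZMod d) :
    WH d p q j k = if j = k + p then ph d (q * k) else 0 := by
  rw [WH]; split_ifs <;> simp [pow_val_mul]

lemma WH_star_apply (p q j k : ZMod d) :
    (WH d p q).map (starRingEnd ℂ) j k = if j = k + p then ph d (-(q * k)) else 0 := by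
  rw [Matrix.map_apply, WH_apply]; split_ifs <;> simp [star_ph]

lemma WH_conjT_apply (p q j k : ZMod d) :
    (WH d p q)ᴴ j k = if k = j + p then ph d (-(q * j)) else 0 := by
  rw [Matrix.conjTranspose_apply, WH_apply]; split_ifs <;> simp [star_ph]

lemma doubleBell_apply (r s i j k l : ZMod d) :
    doubleBell d (r, s) (i, j, k, l) =
      (if l = i + r then ph d (-(s * i)) else 0) * (if j = k + r then ph d (s * k) else 0) := by
  rw [doubleBell, WH_conjT_apply, WH_apply]

lemma mulVec_eq (p q : ZMod d) (Ψ : ZMod d × ZMod d × ZMod d × ZMod d → ℂ)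
    (i j k l : ZMod d) :
    (WH d p q ⊗ₖ (WH d p q ⊗ₖ ((WH d p q).map (starRingEnd ℂ) ⊗ₖ
        (WH d p q).map (starRingEnd ℂ)))).mulVec Ψ (i, j, k, l)
      = ph d (q * (i + j - k - l)) * Ψ (i - p, j - p, k - p, l - p) := by
  rw [Matrix.mulVec, dotProduct]
  rw [Fintype.sum_eq_single ((i - p, j - p, k - p, l - p) : ZMod d × ZMod d × ZMod d × ZMod d)]
  · simp only [Matrix.kroneckerMap_apply, WH_apply, WH_star_apply]
    rw [if_pos (by ring), if_pos (by ring), if_pos (by ring), if_pos (by ring)]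
    rw [show ph d (q * (i - p)) * (ph d (q * (j - p)) * (ph d (-(q * (k - p))) *
        ph d (-(q * (l - p))))) = ph d (q * (i + j - k - l)) by
      rw [← ph_add, ← ph_add, ← ph_add]; congr 1; ring]
  · rintro ⟨a, b, c, e⟩ hy
    simp only [Matrix.kroneckerMap_apply, WH_apply, WH_star_apply]
    by_cases ha : a = i - p
    · by_cases hb : b = j - p
      · by_cases hc : c = k - p
        · by_cases he : e = l - p
          · exact absurd (by rw [ha, hb, hc, he]) hy
          · rw [if_neg (show ¬ l = e + p from fun h => he (by rw [h]; ring))]; ring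
        · rw [if_neg (show ¬ k = c + p from fun h => hc (by rw [h]; ring))]; ring
      · rw [if_neg (show ¬ j = b + p from fun h => hb (by rw [h]; ring))]; ring
    · rw [if_neg (show ¬ i = a + p from fun h => ha (by rw [h]; ring))]; ring

end main

section main2
variable (d : ℕ) [NeZero d]

lemma doubleBell_invariant (r s p q : ZMod d) :
    (WH d p q ⊗ₖ (WH d p q ⊗ₖ ((WH d p q).map (starRingEnd ℂ) ⊗ₖ
        (WH d p q).map (starRingEnd ℂ)))).mulVec (doubleBell d (r, s)) =
      doubleBell d (r, s) := by
  funext x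
  obtain ⟨i, j, k, l⟩ := x
  rw [mulVec_eq, doubleBell_apply, doubleBell_apply]
  by_cases hl : l = i + r
  · by_cases hj : j = k + r
    · rw [if_pos hl, if_pos hj,
        if_pos (show l - p = (i - p) + r by rw [hl]; ring),
        if_pos (show j - p = (k - p) + r by rw [hj]; ring)]
      have h0 : q * (i + j - k - l) = 0 := by rw [hl, hj]; ring
      rw [h0, ph_zero, one_mul, ← ph_add, ← ph_add]
      congr 1; ring
    · rw [if_neg hj,
        if_neg (show ¬ j - p = (k - p) + r from fun h => hj (by linear_combination h))]
      ring
  · rw [if_neg hl,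
      if_neg (show ¬ l - p = (i - p) + r from fun h => hl (by linear_combination h))]
    ring

end main2

section main3
variable (d : ℕ) [NeZero d]

lemma inv_mem_span (Ψ : ZMod d × ZMod d × ZMod d × ZMod d → ℂ)
    (H : ∀ p q : ZMod d,
      (WH d p q ⊗ₖ (WH d p q ⊗ₖ ((WH d p q).map (starRingEnd ℂ) ⊗ₖ
        (WH d p q).map (starRingEnd ℂ)))).mulVec Ψ = Ψ) :
    Ψ ∈ Submodule.span ℂ (Set.range (doubleBell d)) := by
  have hd0 : (d : ℂ) ≠ 0 := Nat.cast_ne_zero.mpr (NeZero.ne d)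
  have hsupp : ∀ i j k l : ZMod d, i + j - k - l ≠ 0 → Ψ (i, j, k, l) = 0 := by
    intro i j k l hne
    have h := congrFun (H 0 1) (i, j, k, l)
    rw [mulVec_eq, one_mul, sub_zero, sub_zero, sub_zero, sub_zero] at h
    have h2 : (ph d (i + j - k - l) - 1) * Ψ (i, j, k, l) = 0 := by linear_combination h
    rcases mul_eq_zero.mp h2 with h3 | h3
    · exact absurd ((ph_eq_one_iff d _).mp (by linear_combination h3)) hne
    · exact h3
  have htr : ∀ p i j k l : ZMod d, Ψ (i - p, j - p, k - p, l - p) = Ψ (i, j, k, l) := by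
    intro p i j k l
    have h := congrFun (H p 0) (i, j, k, l)
    rwa [mulVec_eq, zero_mul, ph_zero, one_mul] at h
  have key : Ψ = ∑ rs : ZMod d × ZMod d,
      ((1 / (d : ℂ)) * ∑ t : ZMod d, ph d (-(rs.2 * t)) * Ψ (0, t + rs.1, t, rs.1)) •
        doubleBell d rs := by
    funext x
    obtain ⟨i, j, k, l⟩ := x
    rw [Finset.sum_apply]
    simp only [Pi.smul_apply, smul_eq_mul]
    rw [Fintype.sum_prod_type]
    simp only [doubleBell_apply]
    rw [Fintype.sum_eq_single (l - i) (fun r hr => by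
      simp only [if_neg (show ¬ l = i + r from fun h => hr (by linear_combination -h))]
      simp)]
    simp only [if_pos (show l = i + (l - i) by ring)]
    by_cases hj : j = k + (l - i)
    · simp only [if_pos hj]
      calc Ψ (i, j, k, l)
          = Ψ (0, (k - i) + (l - i), k - i, l - i) := by
            rw [← htr i i j k l]
            have h1 : i - i = (0 : ZMod d) := by ring
            have h2 : j - i = (k - i) + (l - i) := by rw [hj]; ring
            rw [h1, h2]
        _ = (1 / (d : ℂ)) * ∑ t : ZMod d, Ψ (0, t + (l - i), t, l - i) *
              (if k - i - t = 0 then (d : ℂ) else 0) := by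
            rw [Fintype.sum_eq_single (k - i) (fun t ht => by
              rw [if_neg (show ¬ k - i - t = 0 from fun h => ht (by linear_combination -h))]
              ring)]
            rw [if_pos (by ring)]
            field_simp
        _ = (1 / (d : ℂ)) * ∑ t : ZMod d, Ψ (0, t + (l - i), t, l - i) *
              ∑ s : ZMod d, ph d (s * (k - i - t)) := by simp_rw [sum_ph]
        _ = (1 / (d : ℂ)) * ∑ t : ZMod d, ∑ s : ZMod d,
              Ψ (0, t + (l - i), t, l - i) * ph d (s * (k - i - t)) := by
            simp_rw [Finset.mul_sum]
        _ = (1 / (d : ℂ)) * ∑ s : ZMod d, ∑ t : ZMod d,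
              Ψ (0, t + (l - i), t, l - i) * ph d (s * (k - i - t)) := by
            rw [Finset.sum_comm]
        _ = ∑ s : ZMod d, ((1 / (d : ℂ)) * ∑ t : ZMod d,
              ph d (-(s * t)) * Ψ (0, t + (l - i), t, l - i)) *
              (ph d (-(s * i)) * ph d (s * k)) := by
            rw [Finset.mul_sum]
            refine Finset.sum_congr rfl fun s _ => ?_
            rw [mul_assoc]
            congr 1
            rw [Finset.sum_mul]
            refine Finset.sum_congr rfl fun t _ => ?_
            rw [show ph d (s * (k - i - t)) = ph d (-(s * t)) * (ph d (-(s * i)) * ph d (s * k))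
              from by rw [← ph_add, ← ph_add]; congr 1; ring]
            ring
    · simp only [if_neg hj]
      rw [hsupp i j k l (fun h => hj (by linear_combination h))]
      simp
  rw [key]
  exact Submodule.sum_mem _ fun rs _ =>
    Submodule.smul_mem _ _ (Submodule.subset_span ⟨rs, rfl⟩)

end main3

lemma sum_ph' (d : ℕ) [NeZero d] (a : ZMod d) :
    ∑ t : ZMod d, ph d (a * t) = if a = 0 then (d : ℂ) else 0 := by
  simp_rw [mul_comm a]
  exact sum_ph d a

section main4
variable (d : ℕ) [NeZero d]

lemma doubleBell_linearIndependent : LinearIndependent ℂ (doubleBell d) := by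
  have hd0 : (d : ℂ) ≠ 0 := Nat.cast_ne_zero.mpr (NeZero.ne d)
  rw [Fintype.linearIndependent_iff]
  intro g hg rs
  obtain ⟨r, s₀⟩ := rs
  have hval : ∀ t : ZMod d, ∑ s : ZMod d, g (r, s) * ph d (s * t) = 0 := by
    intro t
    have h := congrFun hg (0, t + r, t, r)
    rw [Finset.sum_apply] at h
    simp only [Pi.smul_apply, smul_eq_mul, Pi.zero_apply] at h
    rw [Fintype.sum_prod_type] at h
    simp only [doubleBell_apply] at h
    rw [Fintype.sum_eq_single r (fun r' hr' => by
      simp only [if_neg (show ¬ r = 0 + r' from fun hh => hr' (by linear_combination -hh))]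
      simp)] at h
    simp only [if_pos (show r = 0 + r by ring), if_pos (rfl : t + r = t + r),
      mul_zero, neg_zero, ph_zero, one_mul] at h
    exact h
  have h2 : ∑ s : ZMod d, g (r, s) * (if s - s₀ = 0 then (d : ℂ) else 0) = 0 := by
    calc ∑ s : ZMod d, g (r, s) * (if s - s₀ = 0 then (d : ℂ) else 0)
        = ∑ s : ZMod d, g (r, s) * ∑ t : ZMod d, ph d ((s - s₀) * t) := by simp_rw [sum_ph']
      _ = ∑ s : ZMod d, ∑ t : ZMod d, g (r, s) * ph d ((s - s₀) * t) := by
          simp_rw [Finset.mul_sum]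
      _ = ∑ t : ZMod d, ∑ s : ZMod d, g (r, s) * ph d ((s - s₀) * t) := Finset.sum_comm
      _ = ∑ t : ZMod d, ph d (-(s₀ * t)) * ∑ s : ZMod d, g (r, s) * ph d (s * t) := by
          refine Finset.sum_congr rfl fun t _ => ?_
          rw [Finset.mul_sum]
          refine Finset.sum_congr rfl fun s _ => ?_
          rw [show ph d ((s - s₀) * t) = ph d (-(s₀ * t)) * ph d (s * t) from by
            rw [← ph_add]; congr 1; ring]
          ring
      _ = 0 := by simp [hval]
  rw [Fintype.sum_eq_single s₀ (fun s hs => by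
    rw [if_neg (fun hh => hs (by linear_combination hh)), mul_zero])] at h2
  rw [if_pos (by ring)] at h2
  rcases mul_eq_zero.mp h2 with h3 | h3
  · exact h3
  · exact absurd h3 hd0

end main4

/-- A vector of `(ℂ^d)^⊗4` is invariant under `U_{p,q} ⊗ U_{p,q} ⊗ conj(U_{p,q}) ⊗ conj(U_{p,q})`
for all `p,q` iff it lies in the span of the d² double-Bell vectors; in particular the
invariant subspace has dimension d². -/
theorem invariant_vectors_eq_doubleBell_span (d : ℕ) [NeZero d] :
    (∀ Ψ : ZMod d × ZMod d × ZMod d × ZMod d → ℂ,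
      (∀ p q : ZMod d,
        (WH d p q ⊗ₖ (WH d p q ⊗ₖ ((WH d p q).map (starRingEnd ℂ) ⊗ₖ
          (WH d p q).map (starRingEnd ℂ)))).mulVec Ψ = Ψ) ↔
      Ψ ∈ Submodule.span ℂ (Set.range (doubleBell d))) ∧
    Module.finrank ℂ (Submodule.span ℂ (Set.range (doubleBell d))) = d ^ 2 := by
  constructor
  · intro Ψ
    constructor
    · exact inv_mem_span d Ψ
    · intro hmem
      induction hmem using Submodule.span_induction with
      | mem x hx =>
        obtain ⟨rs, rfl⟩ := hx
        obtain ⟨r, s⟩ := rs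
        exact fun p q => doubleBell_invariant d r s p q
      | zero => intro p q; rw [Matrix.mulVec_zero]
      | add x y hx hy ihx ihy => intro p q; rw [Matrix.mulVec_add, ihx p q, ihy p q]
      | smul a x hx ih => intro p q; rw [Matrix.mulVec_smul, ih p q]
  · rw [finrank_span_eq_card (doubleBell_linearIndependent d)]
    rw [Fintype.card_prod, ZMod.card, sq]
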